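/- Suppose p ∈ ℤ^n and q ∈ ℤ^m have positive nonincreasing entries with Σ_j p_j = Σ_i q_i = N. Then trun_{P,Q} T is rank-nondecreasing (i.e., rank((trun_{P,Q} T)(X)) ≥ rank(X) for every positive-semidefinite X ∈ Mat_N(ℂ)) if and only if T is (P,Q)-rank-nondecreasing. -/

import Mathlib

open Matrix BigOperators ComplexOrder

noncomputable section

/-- `η_j` : the projection onto the first `j` coordinates, as a `j × k` matrix. -/
def proj (j k : ℕ) : Matrix (Fin j) (Fin k) ℂ :=
  Matrix.of fun i l => if (i : ℕ) = (l : ℕ) then 1 else 0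

/-- `Δa_j = a_j − a_{j+1}`, with the convention `a_{k+1} = 0`. -/
def delta {k : ℕ} (a : Fin k → ℝ) (j : Fin k) : ℝ :=
  a j - (if h : (j : ℕ) + 1 < k then a ⟨(j : ℕ) + 1, h⟩ else 0)

/-- Integer version of `delta`. -/
def deltaNat {k : ℕ} (a : Fin k → ℕ) (j : Fin k) : ℕ :=
  a j - (if h : (j : ℕ) + 1 < k then a ⟨(j : ℕ) + 1, h⟩ else 0)

/-- The relative determinant `det(diag a, X) = ∏_j det(η_j X η_j†)^{Δa_j}` (real exponents,
with the convention `0 ^ 0 = 1`). -/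
def relDet {k : ℕ} (a : Fin k → ℝ) (X : Matrix (Fin k) (Fin k) ℂ) : ℝ :=
  ∏ j : Fin k,
    ((proj ((j : ℕ) + 1) k * X * (proj ((j : ℕ) + 1) k)ᴴ).det.re) ^ (delta a j)

/-- Complex relative determinant for integral weights. -/
def relDetC {k : ℕ} (a : Fin k → ℕ) (X : Matrix (Fin k) (Fin k) ℂ) : ℂ :=
  ∏ j : Fin k,
    ((proj ((j : ℕ) + 1) k * X * (proj ((j : ℕ) + 1) k)ᴴ).det) ^ (deltaNat a j)

/-- The completely positive map `T(X) = Σ A_i X A_i†` with Kraus operators `A i`. -/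
def cpMap {ι κ : Type*} [Fintype ι] {r : ℕ} (A : Fin r → Matrix κ ι ℂ)
    (X : Matrix ι ι ℂ) : Matrix κ κ ℂ :=
  ∑ i, A i * X * (A i)ᴴ

/-- The dual completely positive map `T*(Y) = Σ A_i† Y A_i`. -/
def cpDual {ι κ : Type*} [Fintype κ] {r : ℕ} (A : Fin r → Matrix κ ι ℂ)
    (Y : Matrix κ κ ℂ) : Matrix ι ι ℂ :=
  ∑ i, (A i)ᴴ * Y * A i

/-- Frobenius norm `‖A‖ = √(Tr A Aᴴ)`. -/
def frob {ι κ : Type*} [Fintype ι] [Fintype κ] (A : Matrix ι κ ℂ) : ℝ :=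
  Real.sqrt (A * Aᴴ).trace.re

/-- Upper triangular predicate. -/
def UT {k : ℕ} (g : Matrix (Fin k) (Fin k) ℂ) : Prop :=
  ∀ i j : Fin k, j < i → g i j = 0

/-- Capacity with specified marginals:
`cap(T,P,Q) = inf over invertible upper triangular h of det(Q, T(hPh†)) / det(P, h†h)`. -/
def cap {n m r : ℕ} (A : Fin r → Matrix (Fin m) (Fin n) ℂ)
    (p : Fin n → ℝ) (q : Fin m → ℝ) : ℝ :=
  sInf { x : ℝ | ∃ h : Matrix (Fin n) (Fin n) ℂ, IsUnit h.det ∧ UT h ∧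
    x = relDet q (cpMap A (h * Matrix.diagonal (fun j => (p j : ℂ)) * hᴴ)) /
        relDet p (hᴴ * h) }

/-- Span of the first `i` standard basis vectors of `ℂ^k`. -/
def coordSub (k i : ℕ) : Submodule ℂ (Fin k → ℂ) where
  carrier := { x | ∀ l : Fin k, i ≤ (l : ℕ) → x l = 0 }
  add_mem' := by intro a b ha hb l hl; simp [ha l hl, hb l hl]
  zero_mem' := by intro l _; rfl
  smul_mem' := by intro c x hx l hl; simp [hx l hl]

/-- `(L, R)` is a `T`-independent pair: `A_i R ⊥ L` for all `i`. -/
def TIndep {n m r : ℕ} (A : Fin r → Matrix (Fin m) (Fin n) ℂ)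
    (L : Submodule ℂ (Fin m → ℂ)) (R : Submodule ℂ (Fin n → ℂ)) : Prop :=
  ∀ i : Fin r, ∀ x ∈ R, ∀ y ∈ L, star y ⬝ᵥ (A i).mulVec x = 0

/-- `(P,Q)`-rank-nondecreasingness. -/
def rankNonDec {n m r : ℕ} (A : Fin r → Matrix (Fin m) (Fin n) ℂ)
    (p : Fin n → ℝ) (q : Fin m → ℝ) : Prop :=
  ∀ L : Submodule ℂ (Fin m → ℂ), ∀ R : Submodule ℂ (Fin n → ℂ), TIndep A L R →
    (∑ i : Fin m, delta q i * (Module.finrank ℂ ↥(coordSub m ((i : ℕ) + 1) ⊓ L) : ℝ)) +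
      (∑ j : Fin n, delta p j * (Module.finrank ℂ ↥(coordSub n ((j : ℕ) + 1) ⊓ R) : ℝ))
      ≤ ∑ j, p j

/-- `λ'_{i+1}`: number of parts of `lam` that are `> i` (0-indexed conjugate partition). -/
def conj' {k : ℕ} (lam : Fin k → ℕ) (i : ℕ) : ℕ :=
  (Finset.univ.filter fun j : Fin k => i < lam j).card

lemma conj'_le {k : ℕ} (lam : Fin k → ℕ) (i : ℕ) : conj' lam i ≤ k := by
  classical
  calc conj' lam i ≤ Finset.univ.card := Finset.card_filter_le _ _
    _ = k := by simp

/-- Index set for the blocks of `G_λ`; it has cardinality `Σ_i λ'_i = Σ_j λ_j`. -/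
abbrev lamIdx {k : ℕ} (lam : Fin k → ℕ) : Type :=
  Σ i : Fin (Finset.univ.sup lam), Fin (conj' lam (i : ℕ))

/-- The gadget map `G_λ(X) = ⊕_{i=1}^{λ_1} η_{λ'_i} X η_{λ'_i}†`. -/
def Gmap {k : ℕ} (lam : Fin k → ℕ) (X : Matrix (Fin k) (Fin k) ℂ) :
    Matrix (lamIdx lam) (lamIdx lam) ℂ := fun s t =>
  if s.1 = t.1 then
    X (Fin.castLE (conj'_le lam (s.1 : ℕ)) s.2) (Fin.castLE (conj'_le lam (t.1 : ℕ)) t.2)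
  else 0

/-- The adjoint `G_λ*` of the gadget map with respect to the trace inner product. -/
def GmapAdj {k : ℕ} (lam : Fin k → ℕ) (Y : Matrix (lamIdx lam) (lamIdx lam) ℂ) :
    Matrix (Fin k) (Fin k) ℂ := fun a b =>
  ∑ i : Fin (Finset.univ.sup lam),
    if h : (a : ℕ) < conj' lam (i : ℕ) ∧ (b : ℕ) < conj' lam (i : ℕ) then
      Y ⟨i, ⟨(a : ℕ), h.1⟩⟩ ⟨i, ⟨(b : ℕ), h.2⟩⟩
    else 0

/-- The reduction `trun_{P,Q} T = G_q ∘ T ∘ G_p*`. -/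
def trun {n m r : ℕ} (A : Fin r → Matrix (Fin m) (Fin n) ℂ) (p : Fin n → ℕ) (q : Fin m → ℕ)
    (X : Matrix (lamIdx p) (lamIdx p) ℂ) : Matrix (lamIdx q) (lamIdx q) ℂ :=
  Gmap q (cpMap A (GmapAdj p X))

/-- The dual of the reduction: `(trun_{P,Q} T)* = G_p ∘ T* ∘ G_q*`. -/
def trunDual {n m r : ℕ} (A : Fin r → Matrix (Fin m) (Fin n) ℂ) (p : Fin n → ℕ) (q : Fin m → ℕ)
    (Y : Matrix (lamIdx q) (lamIdx q) ℂ) : Matrix (lamIdx p) (lamIdx p) ℂ :=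
  Gmap p (cpDual A (GmapAdj q Y))

/-- Shannon entropy with convention `0 · log 0 = 0` (note `Real.log 0 = 0`). -/
def entropy {k : ℕ} (p : Fin k → ℝ) : ℝ := -∑ j, p j * Real.log (p j)

/-- The distance-to-target measure `ds_{P,Q}(T)`. -/
def ds {n m r : ℕ} (A : Fin r → Matrix (Fin m) (Fin n) ℂ)
    (p : Fin n → ℝ) (q : Fin m → ℝ) : ℝ :=
  (∑ j : Fin n, delta p j *
      (frob (proj ((j : ℕ) + 1) n *
        (cpDual A (Matrix.diagonal fun i => (q i : ℂ)) - 1) * (proj ((j : ℕ) + 1) n)ᴴ)) ^ 2) +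
    ∑ i : Fin m, delta q i *
      (frob (proj ((i : ℕ) + 1) m *
        (cpMap A (Matrix.diagonal fun j => (p j : ℂ)) - 1) * (proj ((i : ℕ) + 1) m)ᴴ)) ^ 2

/-- `(u_1,…,u_n)` can be approximately put in `Q`-isotropic position with respect to `p`. -/
def approxIso {m n : ℕ} (u : Fin n → Fin m → ℂ) (p : Fin n → ℝ)
    (Q : Matrix (Fin m) (Fin m) ℂ) : Prop :=
  ∀ ε : ℝ, 0 < ε → ∃ B : Matrix (Fin m) (Fin m) ℂ, IsUnit B.det ∧
    frob ((∑ i : Fin n,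
      (((p i / ∑ a, Complex.normSq (B.mulVec (u i) a)) : ℝ) : ℂ) •
        Matrix.vecMulVec (B.mulVec (u i)) (star (B.mulVec (u i)))) - Q) ≤ ε

section S4AuxSection
open Submodule Module

namespace S4




/-- sesquilinear orthogonal complement in `Fin k → ℂ` -/
def perp {k : ℕ} (U : Submodule ℂ (Fin k → ℂ)) : Submodule ℂ (Fin k → ℂ) where
  carrier := {x | ∀ u ∈ U, star u ⬝ᵥ x = 0}
  add_mem' := by
    intro a b ha hb u hu
    simp [dotProduct_add, ha u hu, hb u hu]
  zero_mem' := by intro u hu; simp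
  smul_mem' := by
    intro c x hx u hu
    simp [dotProduct_smul, hx u hu]

lemma mem_perp {k : ℕ} {U : Submodule ℂ (Fin k → ℂ)} {x : Fin k → ℂ} :
    x ∈ perp U ↔ ∀ u ∈ U, star u ⬝ᵥ x = 0 := Iff.rfl

lemma star_dot_comm {k : ℕ} (u x : Fin k → ℂ) :
    star (star u ⬝ᵥ x) = star x ⬝ᵥ u := by
  simp [dotProduct, Finset.mul_sum, star_sum, mul_comm]

lemma sum_dotProduct' {k : ℕ} {ι : Type*} (s : Finset ι) (v : ι → (Fin k → ℂ))
    (x : Fin k → ℂ) : (∑ l ∈ s, v l) ⬝ᵥ x = ∑ l ∈ s, v l ⬝ᵥ x := by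
  simp only [dotProduct, Finset.sum_apply, Finset.sum_mul]
  rw [Finset.sum_comm]

/-- rank-nullity for the image of a submodule -/
lemma finrank_map_add_inf_ker {M N : Type*} [AddCommGroup M] [Module ℂ M]
    [AddCommGroup N] [Module ℂ N] [FiniteDimensional ℂ M]
    (f : M →ₗ[ℂ] N) (U : Submodule ℂ M) :
    finrank ℂ (U.map f) + finrank ℂ ↥(U ⊓ LinearMap.ker f) = finrank ℂ U := by
  have h1 := LinearMap.finrank_range_add_finrank_ker (f.domRestrict U)
  rw [LinearMap.range_domRestrict, LinearMap.ker_domRestrict] at h1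
  have h2 : Submodule.comap U.subtype (LinearMap.ker f)
      = Submodule.comap U.subtype (U ⊓ LinearMap.ker f) := by
    ext x; simp [x.2]
  rw [h2] at h1
  rw [(Submodule.comapSubtypeEquivOfLe
    (inf_le_left : U ⊓ LinearMap.ker f ≤ U)).finrank_eq] at h1
  exact h1

lemma finrank_perp_add {k : ℕ} (U : Submodule ℂ (Fin k → ℂ)) :
    finrank ℂ (perp U) + finrank ℂ U = k := by
  classical
  set d := finrank ℂ U
  let b : Basis (Fin d) ℂ U := Module.finBasis ℂ U
  let M : Matrix (Fin d) (Fin k) ℂ := Matrix.of fun l a => star ((b l : Fin k → ℂ) a)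
  have hker : LinearMap.ker M.mulVecLin = perp U := by
    ext x
    constructor
    · intro hx u hu
      have hrepr := b.sum_repr ⟨u, hu⟩
      have hu' : u = ∑ l, b.repr ⟨u, hu⟩ l • (b l : Fin k → ℂ) := by
        have := congrArg (Subtype.val) hrepr
        push_cast at this
        exact this.symm
      rw [hu']
      have hx' : ∀ l, star ((b l : Fin k → ℂ)) ⬝ᵥ x = 0 := by
        intro l
        have := congrFun hx l
        simpa [M, Matrix.mulVecLin_apply, Matrix.mulVec, dotProduct] using this
      rw [star_sum, sum_dotProduct']
      refine Finset.sum_eq_zero fun l _ => ?_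
      rw [star_smul, smul_dotProduct, hx' l]
      simp
    · intro hx
      have : ∀ l, star ((b l : Fin k → ℂ)) ⬝ᵥ x = 0 := fun l => hx _ (b l).2
      ext l
      simpa [M, Matrix.mulVecLin_apply, Matrix.mulVec, dotProduct] using this l
  have hrank : M.rank = d := by
    rw [← Matrix.rank_conjTranspose]
    have : LinearMap.range (Mᴴ.mulVecLin) = U := by
      rw [Matrix.range_mulVecLin]
      have h3 : (Mᴴ)ᵀ = Matrix.of fun l => (b l : Fin k → ℂ) := by
        ext l a; simp [M]
      rw [show Mᴴ.col = Mᴴᵀ from rfl, h3]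
      have h5 : Set.range (Matrix.of fun l => (b l : Fin k → ℂ))
          = ⇑U.subtype '' Set.range b := by
        rw [← Set.range_comp]; rfl
      rw [h5, Submodule.span_image, Basis.span_eq, Submodule.map_top,
        Submodule.range_subtype]
    rw [Matrix.rank, this]
  have h4 := LinearMap.finrank_range_add_finrank_ker M.mulVecLin
  rw [hker] at h4
  have h5 : finrank ℂ (LinearMap.range M.mulVecLin) = d := hrank
  rw [h5] at h4
  have h6 : finrank ℂ (Fin k → ℂ) = k := by simp
  rw [h6] at h4
  omega

lemma perp_sup {k : ℕ} (U V : Submodule ℂ (Fin k → ℂ)) :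
    perp (U ⊔ V) = perp U ⊓ perp V := by
  ext x
  constructor
  · intro hx
    exact ⟨fun u hu => hx u (Submodule.mem_sup_left hu),
      fun u hu => hx u (Submodule.mem_sup_right hu)⟩
  · rintro ⟨h1, h2⟩ w hw
    rcases Submodule.mem_sup.mp hw with ⟨u, hu, v, hv, rfl⟩
    rw [star_add, add_dotProduct, h1 u hu, h2 v hv, add_zero]

lemma le_perp_perp {k : ℕ} (U : Submodule ℂ (Fin k → ℂ)) : U ≤ perp (perp U) := by
  intro u hu y hy
  have := hy u hu
  have h2 := star_dot_comm u y
  rw [this] at h2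
  simpa using h2.symm

lemma perp_perp {k : ℕ} (U : Submodule ℂ (Fin k → ℂ)) : perp (perp U) = U := by
  have h1 := finrank_perp_add (perp U)
  have h2 := finrank_perp_add U
  exact (Submodule.eq_of_le_of_finrank_le (le_perp_perp U) (by omega)).symm

end S4

namespace S4

lemma proj_mulVec {j k : ℕ} (x : Fin k → ℂ) (i : Fin j) :
    (proj j k).mulVec x i = if h : (i : ℕ) < k then x ⟨(i : ℕ), h⟩ else 0 := by
  rw [Matrix.mulVec, dotProduct]
  split
  · next h =>
    rw [Finset.sum_eq_single ⟨(i : ℕ), h⟩]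
    · simp [proj]
    · intro l _ hl
      have : ¬ ((i : ℕ) = (l : ℕ)) := fun hc => hl (by ext; simp [hc.symm])
      simp [proj, this]
    · simp
  · next h =>
    refine Finset.sum_eq_zero fun l _ => ?_
    have : ¬ ((i : ℕ) = (l : ℕ)) := fun hc => h (hc ▸ l.2)
    simp [proj, this]

lemma mem_ker_proj {j k : ℕ} (x : Fin k → ℂ) :
    x ∈ LinearMap.ker (proj j k).mulVecLin ↔ ∀ l : Fin k, (l : ℕ) < j → x l = 0 := by
  rw [LinearMap.mem_ker]
  constructor
  · intro hx l hl
    have := congrFun hx ⟨(l : ℕ), hl⟩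
    rw [Matrix.mulVecLin_apply, proj_mulVec] at this
    simpa [l.2] using this
  · intro hx
    funext i
    rw [Matrix.mulVecLin_apply, proj_mulVec]
    split
    · next h => exact hx ⟨(i : ℕ), h⟩ i.2
    · rfl

lemma ker_proj_eq_perp_coordSub {j k : ℕ} :
    LinearMap.ker (proj j k).mulVecLin = perp (coordSub k j) := by
  ext x
  rw [mem_ker_proj, mem_perp]
  constructor
  · intro hx u hu
    rw [dotProduct]
    refine Finset.sum_eq_zero fun l _ => ?_
    by_cases hl : (l : ℕ) < j
    · rw [hx l hl, mul_zero]
    · have := hu l (le_of_not_gt hl)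
      simp [Pi.star_apply, this]
  · intro hx l hl
    have hu : (Pi.single l 1 : Fin k → ℂ) ∈ coordSub k j := by
      intro l' hl'
      have : l' ≠ l := fun hc => by omega
      simp [Pi.single_apply, this]
    have := hx _ hu
    rw [dotProduct] at this
    rw [Finset.sum_eq_single l] at this
    · simpa using this
    · intro l' _ hl'
      simp [Pi.single_apply, hl']
    · simp
  
lemma coordSub_zero {k : ℕ} : coordSub k 0 = ⊥ := by
  ext x
  simp only [Submodule.mem_bot]
  constructor
  · intro hx; funext l; exact hx l (Nat.zero_le _)
  · rintro rfl; intro l _; rfl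

lemma finrank_coordSub {k c : ℕ} (h : c ≤ k) : finrank ℂ (coordSub k c) = c := by
  have : finrank ℂ (perp (coordSub k c)) = k - c := by
    rw [← ker_proj_eq_perp_coordSub]
    have h4 := LinearMap.finrank_range_add_finrank_ker (proj c k).mulVecLin
    have hr : finrank ℂ (LinearMap.range (proj c k).mulVecLin) = c := by
      have : LinearMap.range (proj c k).mulVecLin = ⊤ := by
        rw [LinearMap.range_eq_top]
        intro y
        refine ⟨fun l => if h : (l : ℕ) < c then y ⟨(l : ℕ), h⟩ else 0, ?_⟩
        funext i
        rw [Matrix.mulVecLin_apply, proj_mulVec]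
        have hik : (i : ℕ) < k := lt_of_lt_of_le i.2 h
        simp [hik, i.2]
      rw [this]; simp
    rw [hr] at h4
    have h6 : finrank ℂ (Fin k → ℂ) = k := by simp
    rw [h6] at h4
    omega
  have h2 := finrank_perp_add (coordSub k c)
  rw [this] at h2
  omega

/-- Key dimension formula: `dim η_c(Lᗮ) + dim (E_c ⊓ L) = c`. -/
lemma finrank_map_proj_perp {m c : ℕ} (hc : c ≤ m) (L : Submodule ℂ (Fin m → ℂ)) :
    finrank ℂ ((perp L).map (proj c m).mulVecLin) + finrank ℂ ↥(coordSub m c ⊓ L) = c := by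
  have e1 := finrank_map_add_inf_ker (proj c m).mulVecLin (perp L)
  rw [ker_proj_eq_perp_coordSub] at e1
  have e3 : perp L ⊓ perp (coordSub m c) = perp (L ⊔ coordSub m c) := (perp_sup _ _).symm
  rw [e3] at e1
  have e2 := finrank_perp_add L
  have e4 := finrank_perp_add (L ⊔ coordSub m c)
  have e5 := Submodule.finrank_sup_add_finrank_inf_eq L (coordSub m c)
  have e6 : finrank ℂ (coordSub m c) = c := finrank_coordSub hc
  rw [e6] at e5
  have e7 : finrank ℂ ↥(coordSub m c ⊓ L) = finrank ℂ ↥(L ⊓ coordSub m c) := by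
    rw [inf_comm]
  rw [e7]
  omega

end S4

namespace S4

lemma card_filter_coe_lt {k : ℕ} {v : ℕ} (h : v ≤ k) :
    (Finset.univ.filter fun j : Fin k => (j : ℕ) < v).card = v := by
  have : (Finset.univ.filter fun j : Fin k => (j : ℕ) < v)
      = Finset.map (Fin.castLEEmb h) Finset.univ := by
    ext j
    simp only [Finset.mem_filter, Finset.mem_univ, true_and, Finset.mem_map]
    constructor
    · intro hj
      exact ⟨⟨(j : ℕ), hj⟩, by ext; simp⟩
    · rintro ⟨u, -, rfl⟩
      simpa using u.2
  rw [this, Finset.card_map, Finset.card_univ, Fintype.card_fin]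

lemma lt_conj'_iff {k : ℕ} {a : Fin k → ℕ} (ha : Antitone a) (t : Fin k) (i : ℕ) :
    (t : ℕ) < conj' a i ↔ i < a t := by
  constructor
  · intro hlt
    by_contra hc
    push_neg at hc
    have hsub : (Finset.univ.filter fun j : Fin k => i < a j)
        ⊆ Finset.univ.filter fun j : Fin k => (j : ℕ) < (t : ℕ) := by
      intro j hj
      simp only [Finset.mem_filter, Finset.mem_univ, true_and] at hj ⊢
      by_contra hjt
      push_neg at hjt
      have : a j ≤ a t := ha (by exact Fin.le_def.mpr hjt)
      omega
    have := Finset.card_le_card hsub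
    rw [card_filter_coe_lt (le_of_lt t.2)] at this
    exact absurd hlt (by rw [conj']; omega)
  · intro hlt
    have hsub : (Finset.univ.filter fun j : Fin k => (j : ℕ) < (t : ℕ) + 1)
        ⊆ Finset.univ.filter fun j : Fin k => i < a j := by
      intro j hj
      simp only [Finset.mem_filter, Finset.mem_univ, true_and] at hj ⊢
      have : a t ≤ a j := ha (by exact Fin.le_def.mpr (by omega))
      omega
    have := Finset.card_le_card hsub
    rw [card_filter_coe_lt t.2] at this
    rw [conj'] at *
    omega

lemma a_le_sup {k : ℕ} (a : Fin k → ℕ) (j : Fin k) : a j ≤ Finset.univ.sup a :=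
  Finset.le_sup (Finset.mem_univ j)

lemma sum_conj' {k : ℕ} (a : Fin k → ℕ) :
    ∑ i : Fin (Finset.univ.sup a), conj' a (i : ℕ) = ∑ j, a j := by
  have h1 : ∀ i : ℕ, conj' a i = ∑ j : Fin k, if i < a j then 1 else 0 := by
    intro i; rw [conj', Finset.card_filter]
  simp only [h1]
  rw [Finset.sum_comm]
  refine Finset.sum_congr rfl fun j _ => ?_
  have : ∀ i : Fin (Finset.univ.sup a), (if (i : ℕ) < a j then 1 else 0)
      = (if (fun i : Fin (Finset.univ.sup a) => (i : ℕ) < a j) i then 1 else 0) := fun _ => rfl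
  rw [Finset.sum_congr rfl (fun i _ => this i), ← Finset.card_filter,
    card_filter_coe_lt (a_le_sup a j)]

lemma filter_lt_range {k c : ℕ} (h : c ≤ k) :
    (Finset.range k).filter (fun t => t < c) = Finset.range c := by
  ext t
  simp only [Finset.mem_filter, Finset.mem_range]
  omega

/-- Abel summation / conjugate partition identity. -/
lemma abel {k : ℕ} (a : Fin k → ℕ) (ha : Antitone a) (g : ℕ → ℝ) (hg0 : g 0 = 0) :
    ∑ i : Fin (Finset.univ.sup a), g (conj' a (i : ℕ))
      = ∑ j : Fin k, delta (fun j => (a j : ℝ)) j * g ((j : ℕ) + 1) := by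
  set b : ℕ → ℝ := fun t => if h : t < k then (a ⟨t, h⟩ : ℝ) else 0 with hb
  -- LHS = ∑_{t < k} b t * (g (t+1) - g t)
  have lhs_eq : ∑ i : Fin (Finset.univ.sup a), g (conj' a (i : ℕ))
      = ∑ t ∈ Finset.range k, b t * (g (t + 1) - g t) := by
    have hgc : ∀ i : Fin (Finset.univ.sup a), g (conj' a (i : ℕ))
        = ∑ t ∈ Finset.range k, if (t : ℕ) < conj' a (i : ℕ) then g (t + 1) - g t else 0 := by
      intro i
      rw [Finset.sum_ite, Finset.sum_const_zero, add_zero,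
        filter_lt_range (conj'_le a (i : ℕ)), Finset.sum_range_sub g, hg0, sub_zero]
    simp only [hgc]
    rw [Finset.sum_comm]
    refine Finset.sum_congr rfl fun t ht => ?_
    rw [Finset.mem_range] at ht
    have key : ∀ i : Fin (Finset.univ.sup a),
        (if (t : ℕ) < conj' a (i : ℕ) then g (t + 1) - g t else 0)
        = (if (i : ℕ) < a ⟨t, ht⟩ then g (t + 1) - g t else 0) := by
      intro i
      congr 1
      simp only [eq_iff_iff]
      exact lt_conj'_iff ha ⟨t, ht⟩ (i : ℕ)
    rw [Finset.sum_congr rfl (fun i _ => key i)]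
    rw [Finset.sum_ite, Finset.sum_const_zero, add_zero, Finset.sum_const]
    rw [card_filter_coe_lt (a_le_sup a ⟨t, ht⟩)]
    rw [hb]
    simp only [ht, dif_pos]
    rw [nsmul_eq_mul]
  -- RHS = ∑_{t < k} (b t - b (t+1)) * g (t+1)
  have rhs_eq : ∑ j : Fin k, delta (fun j => (a j : ℝ)) j * g ((j : ℕ) + 1)
      = ∑ t ∈ Finset.range k, (b t - b (t + 1)) * g (t + 1) := by
    rw [← Fin.sum_univ_eq_sum_range (fun t => (b t - b (t + 1)) * g (t + 1)) k]
    refine Finset.sum_congr rfl fun j _ => ?_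
    congr 1
    show (a j : ℝ) - (if h : (j : ℕ) + 1 < k then ((a ⟨(j : ℕ) + 1, h⟩ : ℕ) : ℝ) else 0)
        = b (j : ℕ) - b ((j : ℕ) + 1)
    simp only [hb]
    rw [dif_pos j.2]
  rw [lhs_eq, rhs_eq]
  have expand : ∀ t ∈ Finset.range k, b t * (g (t + 1) - g t)
      = b t * g (t + 1) - b t * g t := fun t _ => by ring
  have expand2 : ∀ t ∈ Finset.range k, (b t - b (t + 1)) * g (t + 1)
      = b t * g (t + 1) - b (t + 1) * g (t + 1) := fun t _ => by ring
  rw [Finset.sum_congr rfl expand, Finset.sum_congr rfl expand2,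
    Finset.sum_sub_distrib, Finset.sum_sub_distrib]
  congr 1
  -- ∑_{t<k} b t g t = ∑_{t<k} b (t+1) g (t+1)
  have h1 : ∑ t ∈ Finset.range (k + 1), b t * g t
      = (∑ t ∈ Finset.range k, b (t + 1) * g (t + 1)) + b 0 * g 0 :=
    Finset.sum_range_succ' (fun t => b t * g t) k
  have h2 : ∑ t ∈ Finset.range (k + 1), b t * g t
      = (∑ t ∈ Finset.range k, b t * g t) + b k * g k :=
    Finset.sum_range_succ (fun t => b t * g t) k
  have hbk : b k = 0 := by rw [hb]; simp
  rw [hg0] at h1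
  rw [hbk] at h2
  simp only [mul_zero, zero_mul, add_zero] at h1 h2
  linarith [h1, h2]


end S4

namespace S4

lemma fin_collapse {c : ℕ} (v : ℕ) (f : Fin c → ℂ) :
    (∑ u : Fin c, if v = (u : ℕ) then f u else 0)
      = if h : v < c then f ⟨v, h⟩ else 0 := by
  split
  · next h =>
    rw [Finset.sum_eq_single ⟨v, h⟩]
    · simp
    · intro u _ hu
      have : ¬ (v = (u : ℕ)) := fun hc => hu (by ext; simp [hc.symm])
      simp [this]
    · simp
  · next h =>
    refine Finset.sum_eq_zero fun u _ => ?_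
    have : ¬ (v = (u : ℕ)) := fun hc => h (hc ▸ u.2)
    simp [this]

lemma fin_collapse' {c : ℕ} (v : ℕ) (f : Fin c → ℂ) :
    (∑ u : Fin c, if (u : ℕ) = v then f u else 0)
      = if h : v < c then f ⟨v, h⟩ else 0 := by
  rw [← fin_collapse v f]
  refine Finset.sum_congr rfl fun u _ => ?_
  congr 1
  simp [eq_comm]

lemma sigma_collapse {k : ℕ} (lam : Fin k → ℕ) (j : Fin (Finset.univ.sup lam)) (v : ℕ)
    (f : lamIdx lam → ℂ) :
    (∑ s : lamIdx lam, if s.1 = j ∧ v = (s.2 : ℕ) then f s else 0)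
      = if h : v < conj' lam (j : ℕ) then f ⟨j, ⟨v, h⟩⟩ else 0 := by
  rw [← Finset.univ_sigma_univ, Finset.sum_sigma]
  rw [Finset.sum_eq_single j]
  · have : (∑ u : Fin (conj' lam (j : ℕ)),
        if (⟨j, u⟩ : lamIdx lam).1 = j ∧ v = ((⟨j, u⟩ : lamIdx lam).2 : ℕ)
          then f ⟨j, u⟩ else 0)
        = ∑ u : Fin (conj' lam (j : ℕ)), if v = (u : ℕ) then f ⟨j, u⟩ else 0 := by
      refine Finset.sum_congr rfl fun u _ => ?_
      simp
    rw [this, fin_collapse]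
  · intro i _ hij
    refine Finset.sum_eq_zero fun u _ => ?_
    have : ¬ ((⟨i, u⟩ : lamIdx lam).1 = j ∧ v = (((⟨i, u⟩ : lamIdx lam)).2 : ℕ)) := by
      simp [hij]
    simp [this]
  · simp

/-- the matrix of `η_{λ'_j} ∘ (projection onto block j)` -/
def Emat {k : ℕ} (lam : Fin k → ℕ) (j : Fin (Finset.univ.sup lam)) :
    Matrix (Fin k) (lamIdx lam) ℂ :=
  Matrix.of fun a s => if s.1 = j ∧ (a : ℕ) = (s.2 : ℕ) then 1 else 0

lemma Emat_star {k : ℕ} (lam : Fin k → ℕ) (j : Fin (Finset.univ.sup lam))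
    (a : Fin k) (s : lamIdx lam) : star (Emat lam j a s) = Emat lam j a s := by
  rw [Emat]
  dsimp only [Matrix.of_apply]
  split <;> simp

lemma Emat_mulVec {k : ℕ} (lam : Fin k → ℕ) (j : Fin (Finset.univ.sup lam))
    (x : lamIdx lam → ℂ) (a : Fin k) :
    ((Emat lam j).mulVec x) a
      = if h : (a : ℕ) < conj' lam (j : ℕ) then x ⟨j, ⟨(a : ℕ), h⟩⟩ else 0 := by
  rw [Matrix.mulVec, dotProduct]
  have : ∀ s : lamIdx lam, Emat lam j a s * x s
      = if s.1 = j ∧ (a : ℕ) = (s.2 : ℕ) then x s else 0 := by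
    intro s
    rw [Emat]
    dsimp only [Matrix.of_apply]
    split <;> simp
  rw [Finset.sum_congr rfl fun s _ => this s, sigma_collapse]

lemma EmatH_mulVec {k : ℕ} (lam : Fin k → ℕ) (j : Fin (Finset.univ.sup lam))
    (y : Fin k → ℂ) (s : lamIdx lam) :
    ((Emat lam j)ᴴ.mulVec y) s
      = if s.1 = j then y ⟨(s.2 : ℕ), lt_of_lt_of_le s.2.2 (conj'_le lam (s.1 : ℕ))⟩
        else 0 := by
  rw [Matrix.mulVec, dotProduct]
  have : ∀ a : Fin k, (Emat lam j)ᴴ s a * y a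
      = if s.1 = j ∧ (a : ℕ) = (s.2 : ℕ) then y a else 0 := by
    intro a
    rw [Matrix.conjTranspose_apply, Emat_star, Emat]
    dsimp only [Matrix.of_apply]
    split <;> simp
  rw [Finset.sum_congr rfl fun a _ => this a]
  by_cases hs : s.1 = j
  · simp only [hs, true_and, if_true]
    rw [fin_collapse']
    rw [dif_pos (lt_of_lt_of_le s.2.2 (conj'_le lam (s.1 : ℕ)))]
  · simp [hs]

lemma GmapAdj_eq {k : ℕ} (lam : Fin k → ℕ) (X : Matrix (lamIdx lam) (lamIdx lam) ℂ) :
    GmapAdj lam X = ∑ j, Emat lam j * X * (Emat lam j)ᴴ := by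
  funext a b
  rw [GmapAdj]
  rw [Matrix.sum_apply]
  refine Finset.sum_congr rfl fun j _ => ?_
  -- (E X Eᴴ) a b
  rw [Matrix.mul_apply]
  have h1 : ∀ t : lamIdx lam, (Emat lam j * X) a t * (Emat lam j)ᴴ t b
      = if t.1 = j ∧ (b : ℕ) = (t.2 : ℕ) then (Emat lam j * X) a t else 0 := by
    intro t
    rw [Matrix.conjTranspose_apply, Emat_star, Emat]
    dsimp only [Matrix.of_apply]
    split <;> simp
  rw [Finset.sum_congr rfl fun t _ => h1 t, sigma_collapse]
  have h2 : ∀ t : lamIdx lam, (Emat lam j * X) a t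
      = if h : (a : ℕ) < conj' lam (j : ℕ) then X ⟨j, ⟨(a : ℕ), h⟩⟩ t else 0 := by
    intro t
    rw [Matrix.mul_apply]
    have : ∀ s : lamIdx lam, Emat lam j a s * X s t
        = if s.1 = j ∧ (a : ℕ) = (s.2 : ℕ) then X s t else 0 := by
      intro s
      rw [Emat]
      dsimp only [Matrix.of_apply]
      split <;> simp
    rw [Finset.sum_congr rfl fun s _ => this s, sigma_collapse]
  by_cases hb : (b : ℕ) < conj' lam (j : ℕ)
  · rw [dif_pos hb, h2]
    by_cases ha : (a : ℕ) < conj' lam (j : ℕ)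
    · rw [dif_pos ha, dif_pos ⟨ha, hb⟩]
    · rw [dif_neg ha, dif_neg (by tauto)]
  · rw [dif_neg hb, dif_neg (by tauto)]

lemma Gmap_eq {k : ℕ} (lam : Fin k → ℕ) (Y : Matrix (Fin k) (Fin k) ℂ) :
    Gmap lam Y = ∑ i, (Emat lam i)ᴴ * Y * (Emat lam i) := by
  funext s t
  rw [Gmap, Matrix.sum_apply]
  have h1 : ∀ i, ((Emat lam i)ᴴ * Y * Emat lam i) s t
      = if s.1 = i ∧ t.1 = i then
          Y (Fin.castLE (conj'_le lam (s.1 : ℕ)) s.2) (Fin.castLE (conj'_le lam (t.1 : ℕ)) t.2)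
        else 0 := by
    intro i
    rw [Matrix.mul_apply]
    have e1 : ∀ b : Fin k, ((Emat lam i)ᴴ * Y) s b * Emat lam i b t
        = if (b : ℕ) = (t.2 : ℕ) then
            (if t.1 = i then ((Emat lam i)ᴴ * Y) s b else 0) else 0 := by
      intro b
      rw [Emat]
      dsimp only [Matrix.of_apply]
      by_cases h : t.1 = i ∧ (b : ℕ) = (t.2 : ℕ)
      · rw [if_pos h, if_pos h.2, if_pos h.1, mul_one]
      · rw [if_neg h, mul_zero]
        rcases Decidable.not_and_iff_or_not.mp h with h' | h'
        · by_cases hb : (b : ℕ) = (t.2 : ℕ)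
          · rw [if_pos hb, if_neg h']
          · rw [if_neg hb]
        · rw [if_neg h']
    rw [Finset.sum_congr rfl fun b _ => e1 b, fin_collapse']
    rw [dif_pos (lt_of_lt_of_le t.2.2 (conj'_le lam (t.1 : ℕ)))]
    by_cases ht : t.1 = i
    · rw [if_pos ht]
      rw [Matrix.mul_apply]
      have e2 : ∀ a : Fin k, (Emat lam i)ᴴ s a
            * Y a ⟨(t.2 : ℕ), lt_of_lt_of_le t.2.2 (conj'_le lam (t.1 : ℕ))⟩
          = if (a : ℕ) = (s.2 : ℕ) then
              (if s.1 = i then Y a ⟨(t.2 : ℕ), lt_of_lt_of_le t.2.2 (conj'_le lam (t.1 : ℕ))⟩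
               else 0) else 0 := by
        intro a
        rw [Matrix.conjTranspose_apply, Emat_star, Emat]
        dsimp only [Matrix.of_apply]
        by_cases h : s.1 = i ∧ (a : ℕ) = (s.2 : ℕ)
        · rw [if_pos h, if_pos h.2, if_pos h.1, one_mul]
        · rw [if_neg h, zero_mul]
          rcases Decidable.not_and_iff_or_not.mp h with h' | h'
          · by_cases hb : (a : ℕ) = (s.2 : ℕ)
            · rw [if_pos hb, if_neg h']
            · rw [if_neg hb]
          · rw [if_neg h']
      rw [Finset.sum_congr rfl fun a _ => e2 a, fin_collapse']
      rw [dif_pos (lt_of_lt_of_le s.2.2 (conj'_le lam (s.1 : ℕ)))]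
      by_cases hs : s.1 = i
      · rw [if_pos hs, if_pos ⟨hs, ht⟩]
        rfl
      · rw [if_neg hs, if_neg (by tauto)]
    · rw [if_neg ht, if_neg (by tauto)]
  rw [Finset.sum_congr rfl fun i _ => h1 i]
  rw [Finset.sum_eq_single t.1]
  · by_cases hst : s.1 = t.1
    · rw [if_pos hst, if_pos ⟨hst, rfl⟩]
    · rw [if_neg hst, if_neg (by tauto)]
  · intro i _ hit
    rw [if_neg (by tauto)]
  · simp

end S4

namespace S4

open Submodule

lemma trun_eq {n m r : ℕ} (A : Fin r → Matrix (Fin m) (Fin n) ℂ)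
    (p : Fin n → ℕ) (q : Fin m → ℕ) (X : Matrix (lamIdx p) (lamIdx p) ℂ) :
    trun A p q X
      = ∑ t : Fin (Finset.univ.sup q) × Fin r × Fin (Finset.univ.sup p),
          ((Emat q t.1)ᴴ * A t.2.1 * Emat p t.2.2) * X
            * ((Emat q t.1)ᴴ * A t.2.1 * Emat p t.2.2)ᴴ := by
  rw [trun, GmapAdj_eq, Gmap_eq, cpMap]
  have h1 : ∀ kk : Fin r, A kk * (∑ j, Emat p j * X * (Emat p j)ᴴ) * (A kk)ᴴ
      = ∑ j, (A kk * Emat p j) * X * (A kk * Emat p j)ᴴ := by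
    intro kk
    rw [Matrix.mul_sum, Matrix.sum_mul]
    refine Finset.sum_congr rfl fun j _ => ?_
    rw [Matrix.conjTranspose_mul]
    simp only [Matrix.mul_assoc]
  rw [Finset.sum_congr rfl fun kk _ => h1 kk]
  have h2 : ∀ i, (Emat q i)ᴴ * (∑ kk, ∑ j, (A kk * Emat p j) * X * (A kk * Emat p j)ᴴ)
        * Emat q i
      = ∑ kk, ∑ j, ((Emat q i)ᴴ * A kk * Emat p j) * X
          * ((Emat q i)ᴴ * A kk * Emat p j)ᴴ := by
    intro i
    rw [Matrix.mul_sum, Matrix.sum_mul]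
    refine Finset.sum_congr rfl fun kk _ => ?_
    rw [Matrix.mul_sum, Matrix.sum_mul]
    refine Finset.sum_congr rfl fun j _ => ?_
    simp only [Matrix.conjTranspose_mul, Matrix.conjTranspose_conjTranspose]
    simp only [Matrix.mul_assoc]
  rw [Finset.sum_congr rfl fun i _ => h2 i]
  rw [Fintype.sum_prod_type]
  refine Finset.sum_congr rfl fun i _ => ?_
  rw [Fintype.sum_prod_type]

variable {ι κ s : Type*} [Fintype ι] [Fintype κ] [DecidableEq ι] [Fintype s]

lemma rank_sum_kraus {σ : Type*} [Fintype σ] (B : s → Matrix κ ι ℂ) (M : Matrix ι σ ℂ) :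
    (∑ t, (B t * M) * (B t * M)ᴴ).rank
      = finrank ℂ ↥(⨆ t, (LinearMap.range M.mulVecLin).map (B t).mulVecLin) := by
  classical
  set NN : Matrix κ (s × σ) ℂ := Matrix.of fun a tb => (B tb.1 * M) a tb.2 with hNN
  have step1 : NN * NNᴴ = ∑ t, (B t * M) * (B t * M)ᴴ := by
    funext a c
    rw [Matrix.mul_apply, Matrix.sum_apply, Fintype.sum_prod_type]
    refine Finset.sum_congr rfl fun t _ => ?_
    rw [Matrix.mul_apply]
    rfl
  rw [← step1, Matrix.rank_self_mul_conjTranspose]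
  have step3 : LinearMap.range NN.mulVecLin
      = ⨆ t, (LinearMap.range M.mulVecLin).map (B t).mulVecLin := by
    rw [Matrix.range_mulVecLin]
    have hr : Set.range NNᵀ = ⋃ t, Set.range (B t * M)ᵀ := by
      ext x
      simp only [Set.mem_range, Set.mem_iUnion]
      constructor
      · rintro ⟨⟨t, b⟩, rfl⟩
        exact ⟨t, b, rfl⟩
      · rintro ⟨t, b, rfl⟩
        exact ⟨(t, b), rfl⟩
    rw [show NN.col = NNᵀ from rfl, hr, Submodule.span_iUnion]
    refine iSup_congr fun t => ?_
    rw [show (B t * M)ᵀ = (B t * M).col from rfl]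
    rw [← Matrix.range_mulVecLin, Matrix.mulVecLin_mul, LinearMap.range_comp]
  rw [Matrix.rank, step3]

lemma kraus_alg {σ : Type*} [Fintype σ] (B : s → Matrix κ ι ℂ) (M : Matrix ι σ ℂ) :
    ∑ t, B t * (M * Mᴴ) * (B t)ᴴ = ∑ t, (B t * M) * (B t * M)ᴴ := by
  refine Finset.sum_congr rfl fun t _ => ?_
  rw [Matrix.conjTranspose_mul]
  simp only [Matrix.mul_assoc]

lemma rank_le_iff_subspace (B : s → Matrix κ ι ℂ) :
    (∀ X : Matrix ι ι ℂ, X.PosSemidef → X.rank ≤ (∑ t, B t * X * (B t)ᴴ).rank)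
      ↔ ∀ V : Submodule ℂ (ι → ℂ),
          finrank ℂ V ≤ finrank ℂ ↥(⨆ t, V.map (B t).mulVecLin) := by
  constructor
  · intro h V
    set d := finrank ℂ V with hd
    let b : Basis (Fin d) ℂ V := Module.finBasis ℂ V
    set M : Matrix ι (Fin d) ℂ := Matrix.of fun a l => (b l : ι → ℂ) a with hM
    have hrange : LinearMap.range M.mulVecLin = V := by
      rw [Matrix.range_mulVecLin]
      have h3 : Mᵀ = Matrix.of fun l => (b l : ι → ℂ) := by
        ext l a; simp [hM]
      rw [show M.col = Mᵀ from rfl, h3]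
      have h5 : Set.range (Matrix.of fun l => (b l : ι → ℂ))
          = ⇑V.subtype '' Set.range b := by
        rw [← Set.range_comp]; rfl
      rw [h5, Submodule.span_image, Basis.span_eq, Submodule.map_top,
        Submodule.range_subtype]
    have hX : (M * Mᴴ).PosSemidef := Matrix.posSemidef_self_mul_conjTranspose M
    have h6 := h (M * Mᴴ) hX
    rw [kraus_alg B M, rank_sum_kraus B M, hrange] at h6
    rw [Matrix.rank_self_mul_conjTranspose, Matrix.rank, hrange] at h6
    exact h6
  · intro h X hX
    obtain ⟨d, v, hv⟩ := Matrix.posSemidef_iff_eq_sum_vecMulVec.mp hX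
    set M : Matrix ι (Fin d) ℂ := Matrix.of fun a i => v i a with hM
    have hXM : X = M * Mᴴ := by
      rw [hv]; ext a b; simp [hM, Matrix.mul_apply, Matrix.vecMulVec_apply, Matrix.sum_apply]
    rw [hXM, kraus_alg B M, rank_sum_kraus B M, Matrix.rank_self_mul_conjTranspose, Matrix.rank]
    exact h _

/-- dimension of a sup of block-supported subspaces -/
lemma finrank_iSup_blocks {k : ℕ} (lam : Fin k → ℕ)
    (U : Fin (Finset.univ.sup lam) → Submodule ℂ (lamIdx lam → ℂ))
    (hU : ∀ i, ∀ x ∈ U i, ∀ s : lamIdx lam, s.1 ≠ i → x s = 0) :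
    finrank ℂ ↥(⨆ i, U i) = ∑ i, finrank ℂ ↥(U i) := by
  classical
  let φ : (∀ i, ↥(U i)) →ₗ[ℂ] (lamIdx lam → ℂ) :=
    { toFun := fun u => ∑ i, ((u i : lamIdx lam → ℂ))
      map_add' := by
        intro u v
        simp [Finset.sum_add_distrib]
      map_smul' := by
        intro c u
        simp [Finset.smul_sum] }
  have hφval : ∀ u, φ u = ∑ i, ((u i : lamIdx lam → ℂ)) := fun _ => rfl
  have hinj : Function.Injective φ := by
    rw [injective_iff_map_eq_zero]
    intro u hu
    have hcomp : ∀ s : lamIdx lam, ∀ i, (u i : lamIdx lam → ℂ) s = 0 := by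
      intro s i
      by_cases hsi : s.1 = i
      · have h0 : (0 : lamIdx lam → ℂ) s = 0 := rfl
        rw [← hu] at h0
        rw [hφval] at h0
        have hs : ∀ j, j ≠ s.1 → (u j : lamIdx lam → ℂ) s = 0 := fun j hj =>
          hU j _ (u j).2 s (fun hc => hj hc.symm)
        rw [Finset.sum_apply, Finset.sum_eq_single s.1] at h0
        · rw [← hsi]; exact h0
        · intro j _ hj; exact hs j hj
        · simp
      · exact hU i _ (u i).2 s hsi
    funext i
    ext s
    exact hcomp s i
  have hrange : LinearMap.range φ = ⨆ i, U i := by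
    apply le_antisymm
    · rintro x ⟨u, rfl⟩
      rw [hφval]
      exact Submodule.sum_mem _ fun i _ => Submodule.mem_iSup_of_mem i (u i).2
    · refine iSup_le fun i x hx => ?_
      refine ⟨Pi.single i ⟨x, hx⟩, ?_⟩
      rw [hφval, Finset.sum_eq_single i]
      · simp
      · intro j _ hj
        rw [Pi.single_eq_of_ne hj]
        rfl
      · simp
  rw [← hrange, LinearMap.finrank_range_of_inj hinj, Module.finrank_pi_fintype]

/-- the dimension of a subspace is at most the sum of dimensions of its block projections -/
lemma finrank_le_sum_blocks {k : ℕ} (lam : Fin k → ℕ) (V : Submodule ℂ (lamIdx lam → ℂ)) :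
    finrank ℂ V ≤ ∑ j, finrank ℂ ↥(V.map (Emat lam j).mulVecLin) := by
  classical
  let φ : ↥V →ₗ[ℂ] (∀ j, ↥(V.map (Emat lam j).mulVecLin)) :=
    LinearMap.pi fun j => LinearMap.codRestrict _ ((Emat lam j).mulVecLin.domRestrict V)
      fun x => Submodule.mem_map_of_mem x.2
  have hinj : Function.Injective φ := by
    rw [injective_iff_map_eq_zero]
    intro x hx
    have hj : ∀ j : Fin (Finset.univ.sup lam), (Emat lam j).mulVec (x : lamIdx lam → ℂ) = 0 := by
      intro j
      have := congrFun hx j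
      have h2 := congrArg Subtype.val this
      exact h2
    ext s
    have h3 := congrFun (hj s.1) ⟨(s.2 : ℕ), lt_of_lt_of_le s.2.2 (conj'_le lam (s.1 : ℕ))⟩
    rw [Emat_mulVec] at h3
    rw [dif_pos s.2.2] at h3
    have h4 : (⟨s.1, ⟨(s.2 : ℕ), s.2.2⟩⟩ : lamIdx lam) = s := by
      rcases s with ⟨s1, s2⟩; rfl
    rw [h4] at h3
    exact h3
  calc finrank ℂ V ≤ finrank ℂ (∀ j, ↥(V.map (Emat lam j).mulVecLin)) :=
        LinearMap.finrank_le_finrank_of_injective hinj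
    _ = ∑ j, finrank ℂ ↥(V.map (Emat lam j).mulVecLin) := Module.finrank_pi_fintype ℂ

end S4

namespace S4

open Submodule

section helpers

variable {k : ℕ} (lam : Fin k → ℕ)

lemma EmatH_map_support (j : Fin (Finset.univ.sup lam)) (U : Submodule ℂ (Fin k → ℂ)) :
    ∀ x ∈ U.map ((Emat lam j)ᴴ).mulVecLin, ∀ s : lamIdx lam, s.1 ≠ j → x s = 0 := by
  rintro x ⟨y, _, rfl⟩ s hs
  rw [Matrix.mulVecLin_apply, EmatH_mulVec, if_neg hs]

lemma finrank_map_EmatH (j : Fin (Finset.univ.sup lam)) (U : Submodule ℂ (Fin k → ℂ))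
    (hU : U ≤ coordSub k (conj' lam (j : ℕ))) :
    finrank ℂ (U.map ((Emat lam j)ᴴ).mulVecLin) = finrank ℂ U := by
  have h1 := finrank_map_add_inf_ker ((Emat lam j)ᴴ).mulVecLin U
  have h2 : U ⊓ LinearMap.ker ((Emat lam j)ᴴ).mulVecLin = ⊥ := by
    rw [eq_bot_iff]
    intro x hx
    have hxU : x ∈ U := hx.1
    have hxk : ((Emat lam j)ᴴ).mulVecLin x = 0 := hx.2
    rw [Submodule.mem_bot]
    funext a
    by_cases h : (a : ℕ) < conj' lam (j : ℕ)
    · have h3 := congrFun hxk ⟨j, ⟨(a : ℕ), h⟩⟩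
      rw [Matrix.mulVecLin_apply] at hxk
      rw [Matrix.mulVecLin_apply] at h3
      rw [EmatH_mulVec, if_pos rfl] at h3
      have h4 : (⟨(a : ℕ), lt_of_lt_of_le h (conj'_le lam (j : ℕ))⟩ : Fin k) = a := by
        ext; rfl
      rw [h4] at h3
      exact h3
    · exact hU hxU a (le_of_not_gt h)
  rw [h2, finrank_bot] at h1
  omega

lemma E_EH_ne {j j' : Fin (Finset.univ.sup lam)} (h : j ≠ j') (x : Fin k → ℂ) :
    (Emat lam j).mulVec ((Emat lam j')ᴴ.mulVec x) = 0 := by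
  funext a
  simp only [Pi.zero_apply]
  rw [Emat_mulVec]
  split
  · next ha =>
    rw [EmatH_mulVec, if_neg (by simpa using h)]
  · rfl

lemma E_EH_self (j : Fin (Finset.univ.sup lam)) (x : Fin k → ℂ)
    (hx : x ∈ coordSub k (conj' lam (j : ℕ))) :
    (Emat lam j).mulVec ((Emat lam j)ᴴ.mulVec x) = x := by
  funext a
  rw [Emat_mulVec]
  split
  · next ha =>
    rw [EmatH_mulVec, if_pos rfl]
  · next ha =>
    exact (hx a (le_of_not_gt ha)).symm

/-- the injective matrix embedding of `ℂ^{λ'_i}` into block `i` -/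
def Jmat (i : Fin (Finset.univ.sup lam)) :
    Matrix (lamIdx lam) (Fin (conj' lam (i : ℕ))) ℂ :=
  Matrix.of fun s u => if s.1 = i ∧ (u : ℕ) = (s.2 : ℕ) then 1 else 0

lemma Jmat_mulVec_at (i : Fin (Finset.univ.sup lam)) (y : Fin (conj' lam (i : ℕ)) → ℂ)
    (u : Fin (conj' lam (i : ℕ))) :
    ((Jmat lam i).mulVec y) ⟨i, u⟩ = y u := by
  rw [Matrix.mulVec, dotProduct]
  have h1 : ∀ u' : Fin (conj' lam (i : ℕ)), Jmat lam i ⟨i, u⟩ u' * y u'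
      = if (u' : ℕ) = (u : ℕ) then y u' else 0 := by
    intro u'
    rw [Jmat]
    dsimp only [Matrix.of_apply]
    by_cases h : (u' : ℕ) = (u : ℕ)
    · rw [if_pos ⟨rfl, h⟩, if_pos h, one_mul]
    · rw [if_neg (by tauto), if_neg h, zero_mul]
  rw [Finset.sum_congr rfl fun u' _ => h1 u', fin_collapse', dif_pos u.2]

lemma Jmat_inj (i : Fin (Finset.univ.sup lam)) :
    Function.Injective (Jmat lam i).mulVecLin := by
  intro y z h
  funext u
  have h1 := congrFun h ⟨i, u⟩
  rw [Matrix.mulVecLin_apply, Matrix.mulVecLin_apply, Jmat_mulVec_at, Jmat_mulVec_at] at h1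
  exact h1

lemma EmatH_eq_Jmat_mul_proj (i : Fin (Finset.univ.sup lam)) :
    (Emat lam i)ᴴ = Jmat lam i * proj (conj' lam (i : ℕ)) k := by
  funext s a
  rw [Matrix.conjTranspose_apply, Emat_star, Matrix.mul_apply]
  have h1 : ∀ u : Fin (conj' lam (i : ℕ)), Jmat lam i s u * proj (conj' lam (i : ℕ)) k u a
      = if (u : ℕ) = (s.2 : ℕ) then
          (if s.1 = i then (if (u : ℕ) = (a : ℕ) then 1 else 0) else 0) else 0 := by
    intro u
    rw [Jmat, proj]
    dsimp only [Matrix.of_apply]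
    by_cases h : s.1 = i ∧ (u : ℕ) = (s.2 : ℕ)
    · rw [if_pos h, if_pos h.2, if_pos h.1, one_mul]
    · rw [if_neg h, zero_mul]
      rcases Decidable.not_and_iff_or_not.mp h with h' | h'
      · by_cases hb : (u : ℕ) = (s.2 : ℕ)
        · rw [if_pos hb, if_neg h']
        · rw [if_neg hb]
      · rw [if_neg h']
  rw [Finset.sum_congr rfl fun u _ => h1 u, fin_collapse']
  by_cases hs : s.1 = i
  · have hlt : (s.2 : ℕ) < conj' lam (i : ℕ) := by
      have h0 : conj' lam ((s.1 : Fin (Finset.univ.sup lam)) : ℕ) = conj' lam (i : ℕ) := by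
        rw [hs]
      have h5 := s.2.2
      omega
    rw [dif_pos hlt, if_pos hs, Emat]
    dsimp only [Matrix.of_apply]
    by_cases ha : (a : ℕ) = (s.2 : ℕ)
    · rw [if_pos ⟨hs, ha⟩, if_pos ha.symm]
    · rw [if_neg (by tauto), if_neg (fun hc => ha hc.symm)]
  · rw [Emat]
    dsimp only [Matrix.of_apply]
    rw [if_neg (by tauto)]
    split
    · rfl
    · rfl


lemma finrank_map_EmatH_perp (i : Fin (Finset.univ.sup lam)) (L : Submodule ℂ (Fin k → ℂ)) :
    finrank ℂ ((perp L).map ((Emat lam i)ᴴ).mulVecLin)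
      + finrank ℂ ↥(coordSub k (conj' lam (i : ℕ)) ⊓ L) = conj' lam (i : ℕ) := by
  rw [EmatH_eq_Jmat_mul_proj, Matrix.mulVecLin_mul, Submodule.map_comp]
  have h1 : finrank ℂ ↥(Submodule.map (Jmat lam i).mulVecLin
        ((perp L).map (proj (conj' lam (i : ℕ)) k).mulVecLin))
      = finrank ℂ ((perp L).map (proj (conj' lam (i : ℕ)) k).mulVecLin) :=
    (Submodule.equivMapOfInjective _ (Jmat_inj lam i) _).finrank_eq.symm
  rw [h1]
  exact finrank_map_proj_perp (conj'_le lam (i : ℕ)) L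

lemma abel_inf (ha : Antitone lam) (L : Submodule ℂ (Fin k → ℂ)) :
    ∑ i : Fin (Finset.univ.sup lam),
        (finrank ℂ ↥(coordSub k (conj' lam (i : ℕ)) ⊓ L) : ℝ)
      = ∑ j : Fin k, delta (fun j => (lam j : ℝ)) j
          * (finrank ℂ ↥(coordSub k ((j : ℕ) + 1) ⊓ L) : ℝ) :=
  abel lam ha (fun t => (finrank ℂ ↥(coordSub k t ⊓ L) : ℝ))
    (by show ((finrank ℂ ↥(coordSub k 0 ⊓ L) : ℕ) : ℝ) = 0
        rw [coordSub_zero, bot_inf_eq, finrank_bot]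
        simp)

end helpers

section main

variable {n m r : ℕ} (A : Fin r → Matrix (Fin m) (Fin n) ℂ) (p : Fin n → ℕ) (q : Fin m → ℕ)

/-- the Kraus operators of `trun A p q` -/
def Bmat (t : Fin (Finset.univ.sup q) × Fin r × Fin (Finset.univ.sup p)) :
    Matrix (lamIdx q) (lamIdx p) ℂ :=
  (Emat q t.1)ᴴ * A t.2.1 * Emat p t.2.2

lemma forward_dir (hp : Antitone p) (hq : Antitone q) (hpq : ∑ j, p j = ∑ i, q i)
    (hrank : ∀ V : Submodule ℂ (lamIdx p → ℂ),
      finrank ℂ V ≤ finrank ℂ ↥(⨆ t, V.map (Bmat A p q t).mulVecLin)) :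
    rankNonDec A (fun j => (p j : ℝ)) (fun i => (q i : ℝ)) := by
  intro L R hTI
  set V : Submodule ℂ (lamIdx p → ℂ) :=
    ⨆ j : Fin (Finset.univ.sup p),
      (coordSub n (conj' p (j : ℕ)) ⊓ R).map ((Emat p j)ᴴ).mulVecLin with hV
  -- dimension of V
  have hVdim : finrank ℂ V
      = ∑ j : Fin (Finset.univ.sup p), finrank ℂ ↥(coordSub n (conj' p (j : ℕ)) ⊓ R) := by
    rw [hV, finrank_iSup_blocks p _ (fun j => EmatH_map_support p j _)]
    exact Finset.sum_congr rfl fun j _ => finrank_map_EmatH p j _ inf_le_left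
  -- the image bound
  set Z : Submodule ℂ (lamIdx q → ℂ) :=
    ⨆ i : Fin (Finset.univ.sup q), (perp L).map ((Emat q i)ᴴ).mulVecLin with hZ
  have hinner : ∀ (kk : Fin r) (j : Fin (Finset.univ.sup p)),
      V.map ((A kk * Emat p j).mulVecLin) ≤ perp L := by
    intro kk j
    rw [hV, Submodule.map_iSup]
    refine iSup_le fun j' => ?_
    rintro x ⟨y, ⟨z, hz, rfl⟩, rfl⟩
    simp only [Matrix.mulVecLin_apply]
    have hxin : (Emat p j).mulVec ((Emat p j')ᴴ.mulVec z) ∈ R := by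
      by_cases hjj : j = j'
      · subst hjj
        rw [E_EH_self p j z hz.1]
        exact hz.2
      · rw [E_EH_ne p hjj z]
        exact Submodule.zero_mem R
    have hsplit : (A kk * Emat p j).mulVec ((Emat p j')ᴴ.mulVec z)
        = (A kk).mulVec ((Emat p j).mulVec ((Emat p j')ᴴ.mulVec z)) := by
      simp [Matrix.mulVec_mulVec, Matrix.mul_assoc]
    rw [hsplit]
    intro u hu
    exact hTI kk _ hxin u hu
  have hΦle : (⨆ t, V.map (Bmat A p q t).mulVecLin) ≤ Z := by
    refine iSup_le fun t => ?_
    have hassoc : Bmat A p q t = (Emat q t.1)ᴴ * (A t.2.1 * Emat p t.2.2) := by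
      rw [Bmat, Matrix.mul_assoc]
    rw [hassoc, Matrix.mulVecLin_mul, Submodule.map_comp]
    refine le_trans (Submodule.map_mono (hinner t.2.1 t.2.2)) ?_
    exact le_iSup (fun i => (perp L).map ((Emat q i)ᴴ).mulVecLin) t.1
  have hZdim : finrank ℂ Z
      + ∑ i : Fin (Finset.univ.sup q), finrank ℂ ↥(coordSub m (conj' q (i : ℕ)) ⊓ L)
      = ∑ i : Fin (Finset.univ.sup q), conj' q (i : ℕ) := by
    rw [hZ, finrank_iSup_blocks q _ (fun i => EmatH_map_support q i _),
      ← Finset.sum_add_distrib]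
    exact Finset.sum_congr rfl fun i _ => finrank_map_EmatH_perp q i L
  -- assemble over ℕ
  have hnat : (∑ i : Fin (Finset.univ.sup q), finrank ℂ ↥(coordSub m (conj' q (i : ℕ)) ⊓ L))
      + ∑ j : Fin (Finset.univ.sup p), finrank ℂ ↥(coordSub n (conj' p (j : ℕ)) ⊓ R)
      ≤ ∑ j, p j := by
    have h1 := hrank V
    have h2 : finrank ℂ ↥(⨆ t, V.map (Bmat A p q t).mulVecLin) ≤ finrank ℂ Z :=
      Submodule.finrank_mono hΦle
    have h3 : ∑ i : Fin (Finset.univ.sup q), conj' q (i : ℕ) = ∑ i, q i := sum_conj' q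
    omega
  -- back to the real statement
  have habq := abel_inf q hq L
  have habp := abel_inf p hp R
  rw [← habq, ← habp]
  have hcast : ∑ j, ((fun j => (p j : ℝ)) j) = ((∑ j, p j : ℕ) : ℝ) := by
    push_cast
    rfl
  rw [hcast]
  push_cast
  exact_mod_cast hnat

lemma backward_dir (hp : Antitone p) (hq : Antitone q) (hpq : ∑ j, p j = ∑ i, q i)
    (hRN : rankNonDec A (fun j => (p j : ℝ)) (fun i => (q i : ℝ)))
    (V : Submodule ℂ (lamIdx p → ℂ)) :
    finrank ℂ V ≤ finrank ℂ ↥(⨆ t, V.map (Bmat A p q t).mulVecLin) := by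
  set W : Submodule ℂ (Fin m → ℂ) :=
    ⨆ t : Fin r × Fin (Finset.univ.sup p), V.map ((A t.1 * Emat p t.2).mulVecLin) with hW
  set L : Submodule ℂ (Fin m → ℂ) := perp W with hL
  set Rmax : Submodule ℂ (Fin n → ℂ) :=
    ⨅ kk : Fin r, Submodule.comap (A kk).mulVecLin (perp L) with hRmax
  have hmemR : ∀ x : Fin n → ℂ, x ∈ Rmax ↔ ∀ kk, (A kk).mulVec x ∈ perp L := by
    intro x
    rw [hRmax]
    simp only [Submodule.mem_iInf, Submodule.mem_comap, Matrix.mulVecLin_apply]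
  have hTI : TIndep A L Rmax := by
    intro i x hx y hy
    exact ((hmemR x).mp hx i) y hy
  have h1 : ∀ j : Fin (Finset.univ.sup p),
      V.map (Emat p j).mulVecLin ≤ coordSub n (conj' p (j : ℕ)) ⊓ Rmax := by
    intro j
    rintro x ⟨v, hv, rfl⟩
    rw [Submodule.mem_inf]
    constructor
    · intro a ha
      rw [Matrix.mulVecLin_apply, Emat_mulVec, dif_neg (by omega)]
    · rw [hmemR]
      intro kk
      rw [Matrix.mulVecLin_apply, Matrix.mulVec_mulVec]
      have hin : (A kk * Emat p j).mulVec v ∈ W := by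
        apply Submodule.mem_iSup_of_mem (kk, j)
        exact ⟨v, hv, rfl⟩
      rw [hL, perp_perp]
      exact hin
  have h2 : finrank ℂ V
      ≤ ∑ j : Fin (Finset.univ.sup p), finrank ℂ ↥(coordSub n (conj' p (j : ℕ)) ⊓ Rmax) :=
    le_trans (finrank_le_sum_blocks p V)
      (Finset.sum_le_sum fun j _ => Submodule.finrank_mono (h1 j))
  have h3 : (⨆ t, V.map (Bmat A p q t).mulVecLin)
      = ⨆ i : Fin (Finset.univ.sup q), W.map ((Emat q i)ᴴ).mulVecLin := by
    apply le_antisymm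
    · refine iSup_le fun t => ?_
      have hassoc : Bmat A p q t = (Emat q t.1)ᴴ * (A t.2.1 * Emat p t.2.2) := by
        rw [Bmat, Matrix.mul_assoc]
      rw [hassoc, Matrix.mulVecLin_mul, Submodule.map_comp]
      refine le_trans (Submodule.map_mono ?_)
        (le_iSup (fun i => W.map ((Emat q i)ᴴ).mulVecLin) t.1)
      exact le_iSup (fun t' : Fin r × Fin (Finset.univ.sup p) =>
        V.map ((A t'.1 * Emat p t'.2).mulVecLin)) (t.2.1, t.2.2)
    · refine iSup_le fun i => ?_
      rw [hW, Submodule.map_iSup]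
      refine iSup_le fun t' => ?_
      rw [← Submodule.map_comp, ← Matrix.mulVecLin_mul, ← Matrix.mul_assoc]
      exact le_iSup (fun t => V.map (Bmat A p q t).mulVecLin) (i, t'.1, t'.2)
  have h4 : finrank ℂ ↥(⨆ t, V.map (Bmat A p q t).mulVecLin)
      + ∑ i : Fin (Finset.univ.sup q), finrank ℂ ↥(coordSub m (conj' q (i : ℕ)) ⊓ L)
      = ∑ i : Fin (Finset.univ.sup q), conj' q (i : ℕ) := by
    rw [h3, finrank_iSup_blocks q _ (fun i => EmatH_map_support q i _),
      ← Finset.sum_add_distrib]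
    refine Finset.sum_congr rfl fun i _ => ?_
    have hWL : W = perp L := by rw [hL, perp_perp]
    rw [hWL]
    exact finrank_map_EmatH_perp q i L
  have h6 : (∑ i : Fin (Finset.univ.sup q), finrank ℂ ↥(coordSub m (conj' q (i : ℕ)) ⊓ L))
      + ∑ j : Fin (Finset.univ.sup p), finrank ℂ ↥(coordSub n (conj' p (j : ℕ)) ⊓ Rmax)
      ≤ ∑ j, p j := by
    have hr := hRN L Rmax hTI
    rw [← abel_inf q hq L, ← abel_inf p hp Rmax] at hr
    have hcast : ∑ j, ((fun j => (p j : ℝ)) j) = ((∑ j, p j : ℕ) : ℝ) := by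
      push_cast
      rfl
    rw [hcast] at hr
    exact_mod_cast hr
  have h7 : ∑ i : Fin (Finset.univ.sup q), conj' q (i : ℕ) = ∑ i, q i := sum_conj' q
  omega

end main

end S4

end S4AuxSection

/-- Theorem: for integral marginals, `trun_{P,Q} T` is rank-nondecreasing (Gurvits' sense)
iff `T` is `(P,Q)`-rank-nondecreasing. -/
theorem stmt4 {n m r N : ℕ} (A : Fin r → Matrix (Fin m) (Fin n) ℂ)
    (p : Fin n → ℕ) (q : Fin m → ℕ)
    (hp : Antitone p) (hp0 : ∀ j, 0 < p j) (hq : Antitone q) (hq0 : ∀ i, 0 < q i)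
    (hpN : ∑ j, p j = N) (hqN : ∑ i, q i = N) :
    (∀ X : Matrix (lamIdx p) (lamIdx p) ℂ, X.PosSemidef → X.rank ≤ (trun A p q X).rank)
      ↔ rankNonDec A (fun j => (p j : ℝ)) (fun i => (q i : ℝ)) := by
  classical
  have hpq : ∑ j, p j = ∑ i, q i := by rw [hpN, hqN]
  have hiff := S4.rank_le_iff_subspace (S4.Bmat A p q)
  have htr : ∀ X : Matrix (lamIdx p) (lamIdx p) ℂ,
      trun A p q X = ∑ t, S4.Bmat A p q t * X * (S4.Bmat A p q t)ᴴ := by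
    intro X
    rw [S4.trun_eq]
    rfl
  constructor
  · intro h
    refine S4.forward_dir A p q hp hq hpq ?_
    exact hiff.mp (fun X hX => htr X ▸ h X hX)
  · intro h X hX
    have h2 := hiff.mpr (S4.backward_dir A p q hp hq hpq h) X hX
    rw [htr X]
    exact h2
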